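/- Let (X, Σ) be a measurable space and let μ^{11}, μ^{12}, μ^{21}, μ^{22} be complex measures on (X, Σ) such that for every ζ = (ζ_1, ζ_2) ∈ ℂ² and every A ∈ Σ the number Σ_{i,j=1}^2 ζ_i · conj(ζ_j) · μ^{ij}(A) is a nonnegative real number. Then for every A ∈ Σ, every finite family A_1, …, A_m ∈ Σ of pairwise disjoint sets with A_k ⊆ A for all k, and every real c > 0, one has Σ_{k=1}^m |μ^{12}(A_k)| ≤ (c/2) μ^{11}(A) + (1/(2c)) μ^{22}(A); consequently Σ_{k=1}^m |μ^{12}(A_k)| ≤ (μ^{11}(A) · μ^{22}(A))^{1/2}. (In particular, the total variation of μ^{12} on A is at most (μ^{11}(A) μ^{22}(A))^{1/2}.) -/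

import Mathlib

open MeasureTheory

/-- For a nonnegative definite 2×2 family of complex measures `μ^{ij}` on a
measurable space, for every measurable `A`, every finite disjoint family of measurable
subsets `A_1,…,A_m` of `A`, and every `c > 0`,
`∑_k |μ^{12}(A_k)| ≤ (c/2) μ^{11}(A) + (1/(2c)) μ^{22}(A)`, and consequently
`∑_k |μ^{12}(A_k)| ≤ (μ^{11}(A) μ^{22}(A))^{1/2}`. -/
theorem variation_bound_of_nonneg_definite_pair
    {X : Type*} [MeasurableSpace X]
    (μ11 μ12 μ21 μ22 : MeasureTheory.ComplexMeasure X)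
    (hpos : ∀ (ζ1 ζ2 : ℂ) (A : Set X), MeasurableSet A →
      ∃ r : ℝ, 0 ≤ r ∧
        ζ1 * (starRingEnd ℂ) ζ1 * μ11 A + ζ1 * (starRingEnd ℂ) ζ2 * μ12 A +
          ζ2 * (starRingEnd ℂ) ζ1 * μ21 A + ζ2 * (starRingEnd ℂ) ζ2 * μ22 A = (r : ℂ)) :
    ∀ (A : Set X), MeasurableSet A →
      ∀ (m : ℕ) (As : Fin m → Set X), (∀ k, MeasurableSet (As k)) →
        (Pairwise (Function.onFun Disjoint As)) → (∀ k, As k ⊆ A) →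
        (∀ c : ℝ, 0 < c →
          ∑ k, ‖μ12 (As k)‖ ≤ c / 2 * (μ11 A).re + 1 / (2 * c) * (μ22 A).re) ∧
        ∑ k, ‖μ12 (As k)‖ ≤ Real.sqrt ((μ11 A).re * (μ22 A).re) := by
  -- Basic consequences of nonnegative definiteness
  have h11 : ∀ B : Set X, MeasurableSet B → 0 ≤ (μ11 B).re ∧ (μ11 B).im = 0 := by
    intro B hB
    obtain ⟨r, hr, he⟩ := hpos 1 0 B hB
    simp at he
    rw [he]; simp [hr]
  have h22 : ∀ B : Set X, MeasurableSet B → 0 ≤ (μ22 B).re ∧ (μ22 B).im = 0 := by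
    intro B hB
    obtain ⟨r, hr, he⟩ := hpos 0 1 B hB
    simp at he
    rw [he]; simp [hr]
  have h21 : ∀ B : Set X, MeasurableSet B → μ21 B = (starRingEnd ℂ) (μ12 B) := by
    intro B hB
    obtain ⟨r1, _, e1⟩ := hpos 1 1 B hB
    obtain ⟨r2, _, e2⟩ := hpos 1 Complex.I B hB
    have i1 := congrArg Complex.im e1
    have i2 := congrArg Complex.im e2
    simp [Complex.add_im, Complex.mul_im, Complex.mul_re, (h11 B hB).2, (h22 B hB).2] at i1 i2
    apply Complex.ext <;> simp [Complex.conj_re, Complex.conj_im] <;> linarith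
  -- Pointwise key inequality
  have hkey : ∀ B : Set X, MeasurableSet B → ∀ c : ℝ, 0 < c →
      ‖μ12 B‖ ≤ c / 2 * (μ11 B).re + 1 / (2 * c) * (μ22 B).re := by
    intro B hB c hc
    set b := μ12 B with hbdef
    set n := ‖b‖ with hndef
    set a := (μ11 B).re with hadef
    set d := (μ22 B).re with hddef
    have ha0 : 0 ≤ a := (h11 B hB).1
    have hd0 : 0 ≤ d := (h22 B hB).1
    have haC : μ11 B = (a : ℂ) := Complex.ext rfl (by simpa using (h11 B hB).2)
    have hdC : μ22 B = (d : ℂ) := Complex.ext rfl (by simpa using (h22 B hB).2)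
    obtain ⟨r, hr, heq⟩ := hpos ((c : ℂ) * (starRingEnd ℂ) b) (-(n : ℂ)) B hB
    have hb : b * (starRingEnd ℂ) b = ((n : ℝ) : ℂ) ^ 2 := by
      rw [Complex.mul_conj, Complex.normSq_eq_norm_sq]; push_cast; rfl
    have key : ((c ^ 2 * n ^ 2 * a - 2 * c * n ^ 3 + n ^ 2 * d : ℝ) : ℂ) = (r : ℂ) := by
      rw [← heq, h21 B hB, haC, hdC]
      simp only [map_mul, Complex.conj_conj, Complex.conj_ofReal, map_neg]
      push_cast
      linear_combination (2 * c * (n : ℂ) - c ^ 2 * (a : ℂ)) * hb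
    have keyR : c ^ 2 * n ^ 2 * a - 2 * c * n ^ 3 + n ^ 2 * d = r := by
      exact_mod_cast key
    rcases eq_or_lt_of_le (norm_nonneg b) with h0 | h0
    · show n ≤ _
      have hn : n = 0 := h0.symm
      rw [hn]; positivity
    · show n ≤ _
      have hn : 0 < n := h0
      have h2 : 2 * c * n ^ 2 * n ≤ 2 * c * n ^ 2 * (c / 2 * a + 1 / (2 * c) * d) := by
        have he2 : 2 * c * n ^ 2 * (c / 2 * a + 1 / (2 * c) * d)
            = c ^ 2 * n ^ 2 * a + n ^ 2 * d := by
          field_simp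
        rw [he2]; linarith [hr, keyR]
      exact le_of_mul_le_mul_left h2 (by positivity)
  intro A hA m As hmeas hdisj hsub
  -- Summation bound for the diagonal measures
  have hsumle : ∀ ν : MeasureTheory.ComplexMeasure X,
      (∀ B : Set X, MeasurableSet B → 0 ≤ (ν B).re) →
      ∑ k, (ν (As k)).re ≤ (ν A).re := by
    intro ν hν
    set U := ⋃ k, As k with hUdef
    have hUm : MeasurableSet U := MeasurableSet.iUnion hmeas
    have hUA : U ⊆ A := Set.iUnion_subset hsub
    have hU : ν U = ∑ k, ν (As k) := by
      rw [hUdef, VectorMeasure.of_disjoint_iUnion hmeas hdisj, tsum_fintype]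
    have hsplit : ν U + ν (A \ U) = ν A := VectorMeasure.of_add_of_diff hUm hA hUA
    have hre : (ν A).re = (∑ k, (ν (As k)).re) + (ν (A \ U)).re := by
      rw [← hsplit]
      simp [hU, Complex.add_re, Complex.re_sum]
    rw [hre]
    have : 0 ≤ (ν (A \ U)).re := hν _ (hA.diff hUm)
    linarith
  have hpart1 : ∀ c : ℝ, 0 < c →
      ∑ k, ‖μ12 (As k)‖ ≤ c / 2 * (μ11 A).re + 1 / (2 * c) * (μ22 A).re := by
    intro c hc
    calc ∑ k, ‖μ12 (As k)‖
        ≤ ∑ k, (c / 2 * (μ11 (As k)).re + 1 / (2 * c) * (μ22 (As k)).re) :=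
          Finset.sum_le_sum fun k _ => hkey (As k) (hmeas k) c hc
      _ = c / 2 * (∑ k, (μ11 (As k)).re) + 1 / (2 * c) * (∑ k, (μ22 (As k)).re) := by
          rw [Finset.sum_add_distrib, Finset.mul_sum, Finset.mul_sum]
      _ ≤ c / 2 * (μ11 A).re + 1 / (2 * c) * (μ22 A).re := by
          have s1 := hsumle μ11 fun B hB => (h11 B hB).1
          have s2 := hsumle μ22 fun B hB => (h22 B hB).1
          have hc2 : (0:ℝ) ≤ c / 2 := by positivity
          have hc3 : (0:ℝ) ≤ 1 / (2 * c) := by positivity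
          exact add_le_add (mul_le_mul_of_nonneg_left s1 hc2)
            (mul_le_mul_of_nonneg_left s2 hc3)
  refine ⟨hpart1, ?_⟩
  set S := ∑ k, ‖μ12 (As k)‖ with hSdef
  set a := (μ11 A).re with hadef
  set d := (μ22 A).re with hddef
  have ha0 : 0 ≤ a := (h11 A hA).1
  have hd0 : 0 ≤ d := (h22 A hA).1
  rcases eq_or_lt_of_le ha0 with ha | ha
  · -- a = 0
    by_contra hS
    push_neg at hS
    have hS0 : 0 < S := lt_of_le_of_lt (Real.sqrt_nonneg _) hS
    rcases eq_or_lt_of_le hd0 with hd | hd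
    · have := hpart1 1 one_pos
      rw [← ha, ← hd] at this
      simp at this
      linarith
    · have hc : 0 < d / S := by positivity
      have := hpart1 (d / S) hc
      rw [← ha] at this
      have : S ≤ 1 / (2 * (d / S)) * d := by linarith
      have heq2 : 1 / (2 * (d / S)) * d = S / 2 := by
        field_simp
      rw [heq2] at this
      linarith
  · rcases eq_or_lt_of_le hd0 with hd | hd
    · -- d = 0
      by_contra hS
      push_neg at hS
      have hS0 : 0 < S := lt_of_le_of_lt (Real.sqrt_nonneg _) hS
      have hc : 0 < S / a := by positivity
      have := hpart1 (S / a) hc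
      rw [← hd] at this
      have : S ≤ S / a / 2 * a := by linarith
      have heq2 : S / a / 2 * a = S / 2 := by
        field_simp
      rw [heq2] at this
      linarith
    · -- a, d > 0
      have hsa : 0 < Real.sqrt a := Real.sqrt_pos.mpr ha
      have hsd : 0 < Real.sqrt d := Real.sqrt_pos.mpr hd
      have hc : 0 < Real.sqrt d / Real.sqrt a := by positivity
      have hP := hpart1 _ hc
      have ea : Real.sqrt a ^ 2 = a := Real.sq_sqrt ha0
      have ed : Real.sqrt d ^ 2 = d := Real.sq_sqrt hd0
      have heq2 : Real.sqrt d / Real.sqrt a / 2 * a + 1 / (2 * (Real.sqrt d / Real.sqrt a)) * d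
          = Real.sqrt a * Real.sqrt d := by
        field_simp
        linear_combination (a - 2 * Real.sqrt a ^ 2) * ed - d * ea
      rw [heq2] at hP
      rw [Real.sqrt_mul ha0]
      exact hP
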